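/- Let ‖·‖_X be a norm on ℝ² with B_E ⊆ B_X. For x with ‖x‖_X = 1 and τ(x) a point of the Euclidean unit sphere on a tangent line to S_E through x, one has ‖t·x + (1-t)·τ(x)‖_X ≥ 1 for all t > 1. -/

import Mathlib

open Set Real
open scoped RealInnerProductSpace

theorem stmt3 (N : EuclideanSpace ℝ (Fin 2) → ℝ)
    (hN_add : ∀ v w, N (v + w) ≤ N v + N w)
    (hN_smul : ∀ (a : ℝ) (w : EuclideanSpace ℝ (Fin 2)), N (a • w) = |a| * N w)
    (hN_def : ∀ w, N w = 0 → w = 0)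
    (hNE : ∀ w, N w ≤ ‖w‖)
    (x xp : EuclideanSpace ℝ (Fin 2))
    (hxX : N x = 1) (hxE : 1 ≤ ‖x‖)
    (hxp : ‖xp‖ = 1) (hperp : ⟪x, xp⟫ = 0)
    (τ : EuclideanSpace ℝ (Fin 2))
    (hτ : τ = (‖x‖ ^ 2)⁻¹ • x + Real.sqrt (1 - (‖x‖ ^ 2)⁻¹) • xp) :
    ∀ t : ℝ, 1 < t → 1 ≤ N (t • x + (1 - t) • τ) := by
  intro t ht
  have ht0 : (0:ℝ) < t := by linarith
  have hx0 : (0:ℝ) < ‖x‖ := lt_of_lt_of_le one_pos hxE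
  have hr2 : (0:ℝ) < ‖x‖ ^ 2 := by positivity
  have hle : (‖x‖ ^ 2)⁻¹ ≤ 1 := by
    have h1x : (1:ℝ) ≤ ‖x‖ ^ 2 := by nlinarith
    simpa using inv_anti₀ one_pos h1x
  have hτE : ‖τ‖ = 1 := by
    have hinner : ⟪(‖x‖ ^ 2)⁻¹ • x, Real.sqrt (1 - (‖x‖ ^ 2)⁻¹) • xp⟫ = 0 := by
      rw [real_inner_smul_left, real_inner_smul_right, hperp]; ring
    have hns := norm_add_sq_real ((‖x‖ ^ 2)⁻¹ • x) (Real.sqrt (1 - (‖x‖ ^ 2)⁻¹) • xp)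
    rw [hinner] at hns
    have hsq : ‖τ‖ ^ 2 = 1 := by
      rw [hτ, hns, norm_smul, norm_smul, hxp, Real.norm_eq_abs, Real.norm_eq_abs,
        abs_of_nonneg (le_of_lt (inv_pos.mpr hr2)), abs_of_nonneg (Real.sqrt_nonneg _),
        mul_pow, mul_pow, Real.sq_sqrt (by linarith)]
      field_simp
      ring
    nlinarith [norm_nonneg τ]
  have hNτ : N τ ≤ 1 := (hNE τ).trans_eq hτE
  have htn : (0:ℝ) ≤ (t - 1) / t := div_nonneg (by linarith) ht0.le
  set y := t • x + (1 - t) • τ with hy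
  have hdecomp : x = t⁻¹ • y + ((t - 1) / t) • τ := by
    rw [hy]
    match_scalars <;> field_simp <;> ring
  have h1 : N x ≤ t⁻¹ * N y + ((t - 1) / t) * N τ := by
    calc N x = N (t⁻¹ • y + ((t - 1) / t) • τ) := by rw [← hdecomp]
      _ ≤ N (t⁻¹ • y) + N (((t - 1) / t) • τ) := hN_add _ _
      _ = |t⁻¹| * N y + |(t - 1) / t| * N τ := by rw [hN_smul, hN_smul]
      _ = t⁻¹ * N y + ((t - 1) / t) * N τ := by
          rw [abs_of_pos (inv_pos.mpr ht0), abs_of_nonneg (div_nonneg (by linarith) ht0.le)]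
  have key : 1 ≤ t⁻¹ * N y + (t - 1) / t := by
    have h2 := mul_le_mul_of_nonneg_left hNτ htn
    rw [hxX] at h1; linarith
  have h3 : t * 1 ≤ t * (t⁻¹ * N y + (t - 1) / t) := mul_le_mul_of_nonneg_left key ht0.le
  have h4 : t * (t⁻¹ * N y + (t - 1) / t) = N y + (t - 1) := by
    field_simp
  rw [h4] at h3
  linarith
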